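/- Let X_1,…,X_m and Y_1,…,Y_m be bases of 𝔥 dual with respect to Q_𝔥, C_𝔥 := −Σ_r ad(X_r) ∘ ad(Y_r), A(X,Y) := ⟨C_𝔥 X, Y⟩ for X,Y ∈ 𝔪, and β(X,Y) := −tr_𝔤(ad X ∘ ad Y). Then for all t ∈ ℝ and all X,Y ∈ 𝔪, the Ricci tensor of the connection Λ^t satisfies Ric^t(X,Y) := Σ_i ⟨R^t(X,Z_i)Z_i, Y⟩ = (t−t²)·β(X,Y) + (2t²−2t+1)·A(X,Y). -/

import Mathlib

open scoped BigOperators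

/-- Trace via a `Q`-dual pair of families. -/
lemma trace_eq_sum_dual {E : Type*} [AddCommGroup E] [Module ℝ E]
    {ι : Type*} [Fintype ι] [DecidableEq ι]
    (Q : LinearMap.BilinForm ℝ E) (b c : ι → E)
    (hbc : ∀ a a', Q (b a) (c a') = if a = a' then 1 else 0)
    (hexp : ∀ v, ∑ a, Q v (c a) • b a = v)
    (L : E →ₗ[ℝ] E) :
    LinearMap.trace ℝ E L = ∑ a, Q (L (b a)) (c a) := by
  have hlin : LinearIndependent ℝ b := by
    rw [Fintype.linearIndependent_iff]
    intro g hg a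
    have h := congrArg (fun w => Q w (c a)) hg
    simpa [hbc, Finset.sum_ite_eq'] using h
  have hspan : ⊤ ≤ Submodule.span ℝ (Set.range b) := by
    intro v _
    rw [← hexp v]
    exact Submodule.sum_mem _ fun a _ =>
      Submodule.smul_mem _ _ (Submodule.subset_span ⟨a, rfl⟩)
  let B : Module.Basis ι ℝ E := Module.Basis.mk hlin hspan
  have hBa : ∀ a, B a = b a := fun a => Module.Basis.mk_apply hlin hspan a
  have hrepr : ∀ v a, B.repr v a = Q v (c a) := by
    intro v a
    have h2 : v = ∑ a', Q v (c a') • B a' := by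
      simp only [hBa]; exact (hexp v).symm
    conv_lhs => rw [h2]
    rw [map_sum]
    simp only [map_smul, Module.Basis.repr_self, Finsupp.coe_smul, Finsupp.coe_finset_sum,
      Finset.sum_apply, Pi.smul_apply, Finsupp.single_apply, smul_eq_mul,
      mul_ite, mul_one, mul_zero, Finset.sum_ite_eq', Finset.mem_univ, if_true]
  rw [LinearMap.trace_eq_matrix_trace ℝ B L, Matrix.trace]
  simp only [Matrix.diag, LinearMap.toMatrix_apply, hrepr, hBa]

/-- Curvature `R^t(X,Y)Z` of the connection `Λ^t(X)Y = t[X,Y]_𝔪`. -/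
noncomputable def curvRt {𝔤 : Type*} [LieRing 𝔤] [LieAlgebra ℝ 𝔤]
    (p𝔥 p𝔪 : 𝔤 →ₗ[ℝ] 𝔤) (t : ℝ) (x y z : 𝔤) : 𝔤 :=
  t • p𝔪 ⁅x, t • p𝔪 ⁅y, z⁆⁆ - t • p𝔪 ⁅y, t • p𝔪 ⁅x, z⁆⁆
    - t • p𝔪 ⁅p𝔪 ⁅x, y⁆, z⁆ - ⁅p𝔥 ⁅x, y⁆, z⁆

/-- Wang–Ziller type formula.  With `A(X,Y) = ⟨C_𝔥 X, Y⟩` for the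
Casimir operator `C_𝔥 = −Σ_r ad(X_r)∘ad(Y_r)` of `𝔥` and `β(X,Y) = −tr_𝔤(ad X ∘ ad Y)`,
the Ricci tensor of `Λ^t` satisfies
`Ric^t(X,Y) = (t−t²)β(X,Y) + (2t²−2t+1)A(X,Y)` for all `X,Y ∈ 𝔪`. -/
theorem stmt16
    {𝔤 : Type*} [LieRing 𝔤] [LieAlgebra ℝ 𝔤] [FiniteDimensional ℝ 𝔤]
    (𝔥 𝔪 : Submodule ℝ 𝔤)
    (p𝔥 p𝔪 : 𝔤 →ₗ[ℝ] 𝔤)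
    (hsum : ∀ x, p𝔥 x + p𝔪 x = x)
    (hmem𝔥 : ∀ x, p𝔥 x ∈ 𝔥) (hmem𝔪 : ∀ x, p𝔪 x ∈ 𝔪)
    (hid𝔥 : ∀ x ∈ 𝔥, p𝔥 x = x) (hid𝔪 : ∀ x ∈ 𝔪, p𝔪 x = x)
    (hsub : ∀ x ∈ 𝔥, ∀ y ∈ 𝔥, ⁅x, y⁆ ∈ 𝔥)
    (hhm : ∀ x ∈ 𝔥, ∀ y ∈ 𝔪, ⁅x, y⁆ ∈ 𝔪)
    (Q : LinearMap.BilinForm ℝ 𝔤)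
    (hQsymm : ∀ x y, Q x y = Q y x)
    (hQinv : ∀ w u v : 𝔤, Q ⁅w, u⁆ v + Q u ⁅w, v⁆ = 0)
    (hQ𝔥𝔪 : ∀ x ∈ 𝔥, ∀ y ∈ 𝔪, Q x y = 0)
    (hQpos𝔪 : ∀ x ∈ 𝔪, x ≠ 0 → 0 < Q x x)
    (hQ𝔥nd : ∀ x ∈ 𝔥, (∀ y ∈ 𝔥, Q x y = 0) → x = 0)
    {n : ℕ} (Z : Fin n → 𝔤) (hZ𝔪 : ∀ i, Z i ∈ 𝔪)
    (hZon : ∀ i j, Q (Z i) (Z j) = if i = j then 1 else 0)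
    (hZspan : Submodule.span ℝ (Set.range Z) = 𝔪)
    {m : ℕ} (X Y : Fin m → 𝔤)
    (hX𝔥 : ∀ r, X r ∈ 𝔥) (hY𝔥 : ∀ r, Y r ∈ 𝔥)
    (hdual : ∀ r s, Q (X r) (Y s) = if r = s then 1 else 0)
    (hXspan : Submodule.span ℝ (Set.range X) = 𝔥)
    (hYspan : Submodule.span ℝ (Set.range Y) = 𝔥) :
    ∀ t : ℝ, ∀ x ∈ 𝔪, ∀ y ∈ 𝔪,
      ∑ i, Q (curvRt p𝔥 p𝔪 t x (Z i) (Z i)) y =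
        (t - t ^ 2) *
            (-(LinearMap.trace ℝ 𝔤 ((LieAlgebra.ad ℝ 𝔤 x) ∘ₗ (LieAlgebra.ad ℝ 𝔤 y))))
          + (2 * t ^ 2 - 2 * t + 1) * Q (-∑ r, ⁅X r, ⁅Y r, x⁆⁆) y := by
  classical
  intro t x hx y hy
  -- ## basic consequences of the hypotheses
  have hQ0 : ∀ u ∈ 𝔪, ∀ v ∈ 𝔥, Q u v = 0 := fun u hu v hv => by
    rw [hQsymm]; exact hQ𝔥𝔪 v hv u hu
  have hinv : ∀ w u v : 𝔤, Q ⁅w, u⁆ v = - Q u ⁅w, v⁆ := fun w u v => by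
    have := hQinv w u v; linarith
  have hcyc : ∀ a b c : 𝔤, Q ⁅a, b⁆ c = Q a ⁅b, c⁆ := by
    intro a b c
    have h2 := hQinv b a c
    have h3 : Q ⁅b, a⁆ c = - Q ⁅a, b⁆ c := by
      rw [show (⁅b, a⁆ : 𝔤) = -⁅a, b⁆ from neg_eq_iff_eq_neg.mp (lie_skew a b)]
      rw [map_neg, LinearMap.neg_apply]
    linarith
  have hgen : ∀ a b c : 𝔤, Q ⁅a, b⁆ c = Q ⁅b, c⁆ a := fun a b c => by
    rw [hcyc, hQsymm]
  have hskew1 : ∀ a b c : 𝔤, Q ⁅a, b⁆ c = - Q ⁅b, a⁆ c := by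
    intro a b c
    rw [show (⁅a, b⁆ : 𝔤) = -⁅b, a⁆ from neg_eq_iff_eq_neg.mp (lie_skew b a)]
    rw [map_neg, LinearMap.neg_apply]
  have hQm : ∀ u v, v ∈ 𝔪 → Q (p𝔪 u) v = Q u v := by
    intro u v hv
    conv_rhs => rw [← hsum u]
    rw [map_add, LinearMap.add_apply, hQ𝔥𝔪 _ (hmem𝔥 u) v hv, zero_add]
  have hQh : ∀ u v, v ∈ 𝔥 → Q (p𝔥 u) v = Q u v := by
    intro u v hv
    conv_rhs => rw [← hsum u]
    rw [map_add, LinearMap.add_apply, hQ0 _ (hmem𝔪 u) v hv, add_zero]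
  have hQmm : ∀ u v, Q (p𝔪 u) v = Q (p𝔪 u) (p𝔪 v) := by
    intro u v
    conv_lhs => rw [← hsum v]
    rw [map_add, hQ0 _ (hmem𝔪 u) _ (hmem𝔥 v), zero_add]
  have hsplit : ∀ u v, Q u v = Q (p𝔥 u) (p𝔥 v) + Q (p𝔪 u) (p𝔪 v) := by
    intro u v
    conv_lhs => rw [← hsum u]
    rw [map_add, LinearMap.add_apply]
    congr 1
    · conv_lhs => rw [← hsum v]
      rw [map_add, hQ𝔥𝔪 _ (hmem𝔥 u) _ (hmem𝔪 v), add_zero]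
    · exact hQmm u v
  -- ## coordinate expansions
  have hreprZ : ∀ v ∈ 𝔪, ∑ i, Q v (Z i) • Z i = v := by
    intro v hv
    have hv' : v ∈ Submodule.span ℝ (Set.range Z) := hZspan ▸ hv
    obtain ⟨c, rfl⟩ := (Submodule.mem_span_range_iff_exists_fun ℝ).mp hv'
    have hc : ∀ i, Q (∑ j, c j • Z j) (Z i) = c i := by
      intro i
      rw [map_sum, LinearMap.sum_apply]
      simp [hZon, Finset.sum_ite_eq']
    simp only [hc]
  have hreprX : ∀ v ∈ 𝔥, ∑ r, Q v (Y r) • X r = v := by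
    intro v hv
    have hv' : v ∈ Submodule.span ℝ (Set.range X) := hXspan ▸ hv
    obtain ⟨c, rfl⟩ := (Submodule.mem_span_range_iff_exists_fun ℝ).mp hv'
    have hc : ∀ s, Q (∑ r, c r • X r) (Y s) = c s := by
      intro s
      rw [map_sum, LinearMap.sum_apply]
      simp [hdual, Finset.sum_ite_eq']
    simp only [hc]
  have hph : ∀ u, p𝔥 u = ∑ r, Q u (Y r) • X r := by
    intro u
    rw [← hreprX (p𝔥 u) (hmem𝔥 u)]
    exact Finset.sum_congr rfl fun r _ => by rw [hQh u (Y r) (hY𝔥 r)]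
  have hQexp𝔪 : ∀ u, ∀ v ∈ 𝔪, Q u v = ∑ i, Q u (Z i) * Q v (Z i) := by
    intro u v hv
    conv_lhs => rw [← hreprZ v hv]
    rw [map_sum]
    exact Finset.sum_congr rfl fun i _ => by
      rw [map_smul, smul_eq_mul, mul_comm]
  -- ## bracket-pairing identities
  have e1 : ∀ r i, Q ⁅Y r, x⁆ (Z i) = Q ⁅x, Z i⁆ (Y r) := fun r i => hgen _ _ _
  have e2 : ∀ r i, Q ⁅X r, y⁆ (Z i) = - Q ⁅X r, Z i⁆ y := by
    intro r i
    rw [hgen (X r) y (Z i), hskew1]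
    rw [hgen (X r) (Z i) y]
  have e3 : ∀ r i, Q ⁅y, X r⁆ (Z i) = Q ⁅X r, Z i⁆ y := by
    intro r i
    rw [hskew1, e2, neg_neg]
  have e4 : ∀ r i, Q ⁅x, Y r⁆ (Z i) = - Q ⁅x, Z i⁆ (Y r) := by
    intro r i
    rw [hskew1, e1]
  have e5 : ∀ r i, Q (X r) ⁅y, Z i⁆ = - Q ⁅X r, Z i⁆ y := by
    intro r i
    rw [hQsymm, hgen y (Z i) (X r), hskew1 (Z i) (X r) y]
  have e6 : ∀ r i, Q (X r) ⁅Z i, y⁆ = Q ⁅X r, Z i⁆ y := by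
    intro r i
    rw [show (⁅Z i, y⁆ : 𝔤) = -⁅y, Z i⁆ from neg_eq_iff_eq_neg.mp (lie_skew y (Z i)),
      map_neg, e5, neg_neg]
  have hQph : ∀ u v, Q (p𝔥 u) v = ∑ r, Q u (Y r) * Q (X r) v := by
    intro u v
    rw [hph u, map_sum, LinearMap.sum_apply]
    exact Finset.sum_congr rfl fun r _ => by rw [map_smul, LinearMap.smul_apply, smul_eq_mul]
  -- ## membership facts
  have hyX : ∀ r : Fin m, (⁅X r, y⁆ : 𝔤) ∈ 𝔪 := fun r => hhm _ (hX𝔥 r) y hy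
  have hxY : ∀ r : Fin m, (⁅x, Y r⁆ : 𝔤) ∈ 𝔪 := fun r => by
    rw [show (⁅x, Y r⁆ : 𝔤) = -⁅Y r, x⁆ from neg_eq_iff_eq_neg.mp (lie_skew (Y r) x)]
    exact neg_mem (hhm _ (hY𝔥 r) x hx)
  -- ## the Casimir sum
  have hA : ∑ r, Q ⁅X r, ⁅Y r, x⁆⁆ y
      = ∑ i, ∑ r, Q ⁅x, Z i⁆ (Y r) * Q ⁅X r, Z i⁆ y := by
    have hr : ∀ r : Fin m, Q ⁅X r, ⁅Y r, x⁆⁆ y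
        = ∑ i, Q ⁅x, Z i⁆ (Y r) * Q ⁅X r, Z i⁆ y := by
      intro r
      rw [hinv (X r) ⁅Y r, x⁆ y, hQexp𝔪 _ _ (hyX r), ← Finset.sum_neg_distrib]
      exact Finset.sum_congr rfl fun i _ => by rw [e1, e2]; ring
    rw [Finset.sum_congr rfl fun r _ => hr r, Finset.sum_comm]
  -- ## curvature expansion
  have hcurv : ∀ i, Q (curvRt p𝔥 p𝔪 t x (Z i) (Z i)) y
      = (t - t ^ 2) * Q (p𝔪 ⁅x, Z i⁆) (p𝔪 ⁅y, Z i⁆)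
        - ∑ r, Q ⁅x, Z i⁆ (Y r) * Q ⁅X r, Z i⁆ y := by
    intro i
    have hg : Q ⁅Z i, p𝔪 ⁅x, Z i⁆⁆ y = Q (p𝔪 ⁅x, Z i⁆) (p𝔪 ⁅y, Z i⁆) := by
      rw [hinv (Z i) _ y, hQmm,
        show (⁅Z i, y⁆ : 𝔤) = -⁅y, Z i⁆ from neg_eq_iff_eq_neg.mp (lie_skew y (Z i)),
        map_neg, map_neg, neg_neg]
    have hh : Q ⁅p𝔥 ⁅x, Z i⁆, Z i⁆ y = ∑ r, Q ⁅x, Z i⁆ (Y r) * Q ⁅X r, Z i⁆ y := by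
      rw [hcyc, hQph]
      exact Finset.sum_congr rfl fun r _ => by rw [e6]
    have k1 : Q (p𝔪 ⁅Z i, t • p𝔪 ⁅x, Z i⁆⁆) y
        = t * Q (p𝔪 ⁅x, Z i⁆) (p𝔪 ⁅y, Z i⁆) := by
      rw [hQm _ _ hy, lie_smul, map_smul, LinearMap.smul_apply, smul_eq_mul, hg]
    have k2 : Q (p𝔪 ⁅p𝔪 ⁅x, Z i⁆, Z i⁆) y
        = - Q (p𝔪 ⁅x, Z i⁆) (p𝔪 ⁅y, Z i⁆) := by
      rw [hQm _ _ hy, hskew1, hg]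
    simp only [curvRt, lie_self, map_zero, smul_zero, lie_zero, zero_sub]
    simp only [map_sub, map_neg, map_smul, LinearMap.sub_apply, LinearMap.neg_apply,
      LinearMap.smul_apply, smul_eq_mul]
    rw [k1, k2, hh]
    ring
  -- ## decomposition of the 𝔪-part of the trace
  have hTm : ∑ i, Q ⁅x, ⁅y, Z i⁆⁆ (Z i)
      = -((∑ i, Q (p𝔥 ⁅x, Z i⁆) (p𝔥 ⁅y, Z i⁆))
          + ∑ i, Q (p𝔪 ⁅x, Z i⁆) (p𝔪 ⁅y, Z i⁆)) := by
    rw [← Finset.sum_add_distrib, ← Finset.sum_neg_distrib]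
    refine Finset.sum_congr rfl fun i _ => ?_
    rw [hinv x ⁅y, Z i⁆ (Z i), hsplit ⁅y, Z i⁆ ⁅x, Z i⁆,
      hQsymm (p𝔥 ⁅y, Z i⁆) (p𝔥 ⁅x, Z i⁆), hQsymm (p𝔪 ⁅y, Z i⁆) (p𝔪 ⁅x, Z i⁆)]
  -- ## the 𝔥-part of the trace
  have hTh : ∑ r, Q ⁅x, ⁅y, X r⁆⁆ (Y r)
      = ∑ i, ∑ r, Q ⁅x, Z i⁆ (Y r) * Q ⁅X r, Z i⁆ y := by
    have hr : ∀ r : Fin m, Q ⁅x, ⁅y, X r⁆⁆ (Y r)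
        = ∑ i, Q ⁅x, Z i⁆ (Y r) * Q ⁅X r, Z i⁆ y := by
      intro r
      rw [hinv x ⁅y, X r⁆ (Y r), hQexp𝔪 _ _ (hxY r), ← Finset.sum_neg_distrib]
      exact Finset.sum_congr rfl fun i _ => by rw [e3, e4]; ring
    rw [Finset.sum_congr rfl fun r _ => hr r, Finset.sum_comm]
  -- ## the 𝔥-projection sum
  have hH : ∑ i, Q (p𝔥 ⁅x, Z i⁆) (p𝔥 ⁅y, Z i⁆)
      = -∑ i, ∑ r, Q ⁅x, Z i⁆ (Y r) * Q ⁅X r, Z i⁆ y := by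
    rw [← Finset.sum_neg_distrib]
    refine Finset.sum_congr rfl fun i _ => ?_
    rw [hQph, ← Finset.sum_neg_distrib]
    refine Finset.sum_congr rfl fun r _ => ?_
    have : Q (X r) (p𝔥 ⁅y, Z i⁆) = - Q ⁅X r, Z i⁆ y := by
      rw [hQsymm, hQh _ _ (hX𝔥 r), hQsymm, e5]
    rw [this]
    ring
  -- ## the trace formula
  have htr : LinearMap.trace ℝ 𝔤 ((LieAlgebra.ad ℝ 𝔤 x) ∘ₗ (LieAlgebra.ad ℝ 𝔤 y))
      = (∑ i, Q ⁅x, ⁅y, Z i⁆⁆ (Z i)) + ∑ r, Q ⁅x, ⁅y, X r⁆⁆ (Y r) := by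
    have hbc : ∀ a a' : Fin n ⊕ Fin m,
        Q (Sum.elim Z X a) (Sum.elim Z Y a') = if a = a' then 1 else 0 := by
      rintro (i | r) (j | s)
      · simpa using hZon i j
      · simpa using hQ0 _ (hZ𝔪 i) _ (hY𝔥 s)
      · simpa using hQ𝔥𝔪 _ (hX𝔥 r) _ (hZ𝔪 j)
      · simpa using hdual r s
    have hexp : ∀ v, ∑ a : Fin n ⊕ Fin m, Q v (Sum.elim Z Y a) • Sum.elim Z X a = v := by
      intro v
      rw [Fintype.sum_sum_type]
      simp only [Sum.elim_inl, Sum.elim_inr]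
      have h1 : ∑ i, Q v (Z i) • Z i = p𝔪 v := by
        rw [← hreprZ (p𝔪 v) (hmem𝔪 v)]
        exact Finset.sum_congr rfl fun i _ => by rw [hQm v (Z i) (hZ𝔪 i)]
      have h2 : ∑ r, Q v (Y r) • X r = p𝔥 v := (hph v).symm
      rw [h1, h2, add_comm]
      exact hsum v
    rw [trace_eq_sum_dual Q _ _ hbc hexp, Fintype.sum_sum_type]
    simp only [Sum.elim_inl, Sum.elim_inr, LinearMap.comp_apply, LieAlgebra.ad_apply]
  -- ## assembling everything
  have hcas : Q (-∑ r, ⁅X r, ⁅Y r, x⁆⁆) y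
      = -∑ i, ∑ r, Q ⁅x, Z i⁆ (Y r) * Q ⁅X r, Z i⁆ y := by
    rw [map_neg, LinearMap.neg_apply, map_sum, LinearMap.sum_apply, hA]
  rw [Finset.sum_congr rfl fun i _ => hcurv i, Finset.sum_sub_distrib, ← Finset.mul_sum,
    htr, hTm, hTh, hH, hcas]
  ring
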